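/- Under the heteroskedastic model Y = m(X) + ε·ζ(X_{S*}), if j ∉ S* and X̃ⱼ is a coordinate-wise knockoff of Xⱼ, then the pairs (ε·ζ(X_{S*}), Xⱼ) and (ε·ζ(X_{S*}), X̃ⱼ) have the same distribution. -/

import Mathlib

open MeasureTheory ProbabilityTheory

/-- under the heteroskedastic model, if `j ∉ S*` and `X̃ⱼ` is a
coordinate-wise knockoff of `Xⱼ`, then `(ε·ζ(X_{S*}), Xⱼ)` and `(ε·ζ(X_{S*}), X̃ⱼ)`
have the same distribution. -/
theorem exchangeability_null_feature
    {Ω : Type} [MeasurableSpace Ω] [StandardBorelSpace Ω] [Nonempty Ω]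
    (μ : Measure Ω) [IsProbabilityMeasure μ] {p : ℕ}
    (X : Ω → (Fin p → ℝ)) (Xkj : Ω → ℝ) (ε Y : Ω → ℝ)
    (S : Finset (Fin p)) (j : Fin p) (hj : j ∉ S)
    (ζ : ({ i : Fin p // i ∈ S } → ℝ) → ℝ) (m : (Fin p → ℝ) → ℝ)
    (hX : Measurable X) (hXkj : Measurable Xkj) (hε : Measurable ε)
    (hζ : Measurable ζ) (hm : Measurable m)
    (hζpos : ∀ z, 0 < ζ z)
    (hεindep : IndepFun ε (fun ω => (X ω, Xkj ω)) μ)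
    (hεmean : ∫ ω, ε ω ∂μ = 0) (hεvar : ∫ ω, (ε ω) ^ 2 ∂μ = 1)
    (hY : Y = fun ω => m (X ω) + ε ω * ζ (fun i => X ω i.1))
    (hlaw : μ.map (fun ω => Function.update (X ω) j (Xkj ω)) = μ.map X)
    (hci : CondIndepFun (MeasurableSpace.comap X inferInstance) hX.comap_le Xkj Y μ) :
    μ.map (fun ω => (ε ω * ζ (fun i => X ω i.1), X ω j)) =
      μ.map (fun ω => (ε ω * ζ (fun i => X ω i.1), Xkj ω)) := by
  classical
  -- the "relevant coordinates plus candidate coordinate" map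
  set g : (Fin p → ℝ) → (({ i : Fin p // i ∈ S } → ℝ) × ℝ) :=
    fun v => ((fun i => v i.1), v j) with hg
  have hgm : Measurable g :=
    (measurable_pi_lambda _ (fun i => measurable_pi_apply _)).prodMk (measurable_pi_apply _)
  set U : Ω → (Fin p → ℝ) := fun ω => Function.update (X ω) j (Xkj ω) with hU
  have hUm : Measurable U := by
    apply measurable_pi_lambda
    intro i
    by_cases hij : i = j
    · subst hij
      simpa [U] using hXkj
    · simpa [U, Function.update_apply, hij] using (hX.eval : Measurable fun ω => X ω i)
  -- g ∘ U is the pair (X_S, Xkj)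
  have hgU : (fun ω => g (U ω)) = fun ω => ((fun i : { i : Fin p // i ∈ S } => X ω i.1), Xkj ω) := by
    funext ω
    simp only [g, U]
    refine Prod.ext ?_ ?_
    · funext i
      have : (i : Fin p) ≠ j := fun h => hj (h ▸ i.2)
      simp [Function.update_apply, this]
    · simp
  -- laws of (X_S, X_j) and (X_S, Xkj) agree
  have hmapg : μ.map (fun ω => g (X ω)) = μ.map (fun ω => ((fun i : { i : Fin p // i ∈ S } => X ω i.1), Xkj ω)) := by
    rw [← hgU]
    have h1 : μ.map (fun ω => g (X ω)) = (μ.map X).map g := (Measure.map_map hgm hX).symm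
    have h2 : μ.map (fun ω => g (U ω)) = (μ.map U).map g := (Measure.map_map hgm hUm).symm
    rw [h1, h2, hU, hlaw]
  -- independence of ε with each pair
  have hT1m : Measurable (fun ω => g (X ω)) := hgm.comp hX
  have hT2m : Measurable (fun ω => ((fun i : { i : Fin p // i ∈ S } => X ω i.1), Xkj ω)) := by
    rw [← hgU]; exact hgm.comp hUm
  have i1 : IndepFun ε (fun ω => g (X ω)) μ :=
    hεindep.comp measurable_id (hgm.comp measurable_fst)
  have i2 : IndepFun ε (fun ω => ((fun i : { i : Fin p // i ∈ S } => X ω i.1), Xkj ω)) μ := by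
    rw [← hgU]
    have hupd : Measurable (fun q : (Fin p → ℝ) × ℝ => Function.update q.1 j q.2) := by
      apply measurable_pi_lambda
      intro i
      by_cases hij : i = j
      · subst hij; simpa using measurable_snd
      · simpa [Function.update_apply, hij] using
          (show Measurable (fun c : (Fin p → ℝ) × ℝ => c.1 i) from (measurable_pi_apply i).comp measurable_fst)
    exact hεindep.comp measurable_id (hgm.comp hupd)
  -- joint laws of (ε, pair)
  have e1 := (indepFun_iff_map_prod_eq_prod_map_map hε.aemeasurable hT1m.aemeasurable).mp i1
  have e2 := (indepFun_iff_map_prod_eq_prod_map_map hε.aemeasurable hT2m.aemeasurable).mp i2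
  have hpair : μ.map (fun ω => (ε ω, g (X ω))) =
      μ.map (fun ω => (ε ω, ((fun i : { i : Fin p // i ∈ S } => X ω i.1), Xkj ω))) := by
    rw [e1, e2, hmapg]
  -- push forward by φ
  set φ : ℝ × (({ i : Fin p // i ∈ S } → ℝ) × ℝ) → ℝ × ℝ :=
    fun q => (q.1 * ζ q.2.1, q.2.2) with hφ
  have hφm : Measurable φ :=
    (measurable_fst.mul (hζ.comp (measurable_fst.comp measurable_snd))).prodMk
      (measurable_snd.comp measurable_snd)
  calc μ.map (fun ω => (ε ω * ζ (fun i => X ω i.1), X ω j))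
      = (μ.map (fun ω => (ε ω, g (X ω)))).map φ := by
        rw [Measure.map_map hφm (hε.prodMk hT1m)]; rfl
    _ = (μ.map (fun ω => (ε ω, ((fun i : { i : Fin p // i ∈ S } => X ω i.1), Xkj ω)))).map φ := by
        rw [hpair]
    _ = μ.map (fun ω => (ε ω * ζ (fun i => X ω i.1), Xkj ω)) := by
        rw [Measure.map_map hφm (hε.prodMk hT2m)]; rfl
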